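/- Every geometric lattice of rank 3 has a matching. -/

import Mathlib

universe u

/-- An element of a poset is an *atom* (point) if it is an upper cover of a least element. -/
def IsAtomP {P : Type*} [PartialOrder P] (a : P) : Prop :=
  ∃ z : P, (∀ w, z ≤ w) ∧ z ⋖ a

/-- An element of a poset is a *coatom* (hyperplane) if it is a lower cover of a greatest
element. -/
def IsCoatomP {P : Type*} [PartialOrder P] (a : P) : Prop :=
  ∃ z : P, (∀ w, w ≤ z) ∧ a ⋖ z

/-- A partial order is a *geometric lattice of finite height* if it is a lattice
(binary joins and meets exist), has no infinite chains, is semimodular, and every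
element is a join (least upper bound) of a set of atoms. -/
def IsGeomLatFH (P : Type*) [PartialOrder P] : Prop :=
  (∀ x y : P, ∃ z, IsLUB {x, y} z) ∧
  (∀ x y : P, ∃ z, IsGLB {x, y} z) ∧
  (∀ c : Set P, IsChain (· ≤ ·) c → c.Finite) ∧
  (∀ a b c : P, a ⋖ b → a ⋖ c → b ≠ c → ∃ d, b ⋖ d ∧ c ⋖ d) ∧
  (∀ x : P, ∃ S : Set P, (∀ a ∈ S, IsAtomP a) ∧ IsLUB S x)

/-- `r` is the rank (height) function of a graded bounded poset: `r ⊥ = 0` and `r`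
increases by exactly one across covering pairs. -/
def IsRankFn {L : Type*} [PartialOrder L] [OrderBot L] (r : L → ℕ) : Prop :=
  r ⊥ = 0 ∧ ∀ x y : L, x ⋖ y → r y = r x + 1

/-- A *matching* of a lattice: an injection from atoms to coatoms (hyperplanes) such
that each atom lies below its image. -/
def HasMatching (L : Type*) [CompleteLattice L] : Prop :=
  ∃ f : {a : L // IsAtom a} → {h : L // IsCoatom h},
    Function.Injective f ∧ ∀ a : {a : L // IsAtom a}, (a : L) ≤ ((f a : {h : L // IsCoatom h}) : L)

open Cardinal

lemma exists_sdr {ι Λ : Type u} {κ : Cardinal.{u}} (hκ : ℵ₀ ≤ κ)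
    (hι : #ι ≤ κ) (C : ι → Set Λ) (D : Set Λ) (hC : ∀ i, κ ≤ #(C i))
    (hCD : ∀ i, #((C i ∩ D : Set Λ)) < κ) :
    ∃ f : ι → Λ, Function.Injective f ∧ ∀ i, f i ∈ C i ∧ f i ∉ D := by
  obtain ⟨e⟩ : Nonempty (ι ↪ κ.ord.ToType) := by
    rw [← Cardinal.le_def, Cardinal.mk_ord_toType]; exact hι
  set rel : ι → ι → Prop := fun i j => e i < e j with hrel
  have hwf : WellFounded rel := InvImage.wf e (IsWellFounded.wf)
  have key : ∀ (i : ι) (ih : ∀ j, rel j i → Λ),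
      (C i \ (D ∪ ⋃ (j) (h : rel j i), {ih j h})).Nonempty := by
    intro i ih
    by_contra hne
    rw [Set.not_nonempty_iff_eq_empty, Set.diff_eq_empty] at hne
    have hsub : C i ⊆ ((C i ∩ D) ∪ ⋃ (j) (h : rel j i), {ih j h}) := by
      intro x hx
      rcases hne hx with h | h
      · exact Or.inl ⟨hx, h⟩
      · exact Or.inr h
    have h1 : #(⋃ (j) (h : rel j i), {ih j h} : Set Λ) < κ := by
      have hsub2 : (⋃ (j) (h : rel j i), {ih j h} : Set Λ) ⊆
          Set.range (fun p : {j // rel j i} => ih p.1 p.2) := by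
        intro x hx
        simp only [Set.mem_iUnion, Set.mem_singleton_iff] at hx
        obtain ⟨j, h, rfl⟩ := hx
        exact ⟨⟨j, h⟩, rfl⟩
      calc #(⋃ (j) (h : rel j i), {ih j h} : Set Λ)
          ≤ #(Set.range (fun p : {j // rel j i} => ih p.1 p.2)) := mk_le_mk_of_subset hsub2
        _ ≤ #{j // rel j i} := mk_range_le
        _ ≤ #(Set.Iio (e i)) := by
            refine mk_le_of_injective
              (f := fun p : {j // rel j i} => (⟨e p.1, p.2⟩ : Set.Iio (e i))) ?_
            intro p q h
            exact Subtype.ext (e.injective (congrArg Subtype.val h))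
        _ < κ := Cardinal.mk_Iio_ord_toType _
    have h2 : κ ≤ #((C i ∩ D) ∪ ⋃ (j) (h : rel j i), {ih j h} : Set Λ) :=
      (hC i).trans (mk_le_mk_of_subset hsub)
    have h3 := h2.trans_lt ((mk_union_le _ _).trans_lt (add_lt_of_lt hκ (hCD i) h1))
    exact absurd h3 (lt_irrefl _)
  set F : ∀ i : ι, (∀ j, rel j i → Λ) → Λ := fun i ih => (key i ih).choose with hF
  set g : ι → Λ := hwf.fix F with hg
  have hspec : ∀ i, g i ∈ C i ∧ g i ∉ D ∧ ∀ j, rel j i → g i ≠ g j := by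
    intro i
    have hs := (key i (fun j (_ : rel j i) => g j)).choose_spec
    have hgi : g i = (key i (fun j (_ : rel j i) => g j)).choose := hwf.fix_eq F i
    rw [← hgi] at hs
    obtain ⟨hmem, hnot⟩ := hs
    refine ⟨hmem, fun hD => hnot (Or.inl hD), fun j hj hgij => ?_⟩
    exact hnot (Or.inr (Set.mem_iUnion.2 ⟨j, Set.mem_iUnion.2 ⟨hj, hgij⟩⟩))
  refine ⟨g, ?_, fun i => ⟨(hspec i).1, (hspec i).2.1⟩⟩
  intro i j hij
  by_contra hne
  rcases lt_trichotomy (e i) (e j) with h | h | h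
  · exact (hspec j).2.2 i h hij.symm
  · exact hne (e.injective h)
  · exact (hspec i).2.2 j h hij

section Geom
variable {L : Type u} [CompleteLattice L] {r : L → ℕ}

lemma geom_wfLT (hc : ∀ c : Set L, IsChain (· ≤ ·) c → c.Finite) :
    WellFounded ((· < ·) : L → L → Prop) := by
  rw [RelEmbedding.wellFounded_iff_isEmpty]
  constructor
  intro f
  have hchain : IsChain (· ≤ ·) (Set.range f) := by
    rintro _ ⟨a, rfl⟩ _ ⟨b, rfl⟩ hne
    rcases lt_trichotomy a b with h | h | h
    · exact Or.inr (f.map_rel_iff.2 h).le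
    · exact absurd (congrArg f h) hne
    · exact Or.inl (f.map_rel_iff.2 h).le
  exact (Set.infinite_range_of_injective f.injective) (hc _ hchain)

lemma geom_wfGT (hc : ∀ c : Set L, IsChain (· ≤ ·) c → c.Finite) :
    WellFounded ((· > ·) : L → L → Prop) := by
  rw [RelEmbedding.wellFounded_iff_isEmpty]
  constructor
  intro f
  have hchain : IsChain (· ≤ ·) (Set.range f) := by
    rintro _ ⟨a, rfl⟩ _ ⟨b, rfl⟩ hne
    rcases lt_trichotomy a b with h | h | h
    · exact Or.inl (f.map_rel_iff.2 h).le
    · exact absurd (congrArg f h) hne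
    · exact Or.inr (f.map_rel_iff.2 h).le
  exact (Set.infinite_range_of_injective f.injective) (hc _ hchain)

lemma geom_exists_covby (hc : ∀ c : Set L, IsChain (· ≤ ·) c → c.Finite)
    {x y : L} (h : x < y) : ∃ z, x ⋖ z ∧ z ≤ y := by
  obtain ⟨z, hz, hmin⟩ := (geom_wfLT hc).has_min {z | x < z ∧ z ≤ y} ⟨y, h, le_rfl⟩
  refine ⟨z, ⟨hz.1, fun c hc1 hc2 => ?_⟩, hz.2⟩
  exact hmin c ⟨hc1, hc2.le.trans hz.2⟩ hc2

lemma geom_rank_lt (hc : ∀ c : Set L, IsChain (· ≤ ·) c → c.Finite)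
    (hr : IsRankFn r) {x y : L} (h : x < y) : r x < r y := by
  induction x using (geom_wfGT hc).induction generalizing y with
  | _ x ih =>
    obtain ⟨z, hcov, hzy⟩ := geom_exists_covby hc h
    rcases eq_or_lt_of_le hzy with rfl | hlt
    · rw [hr.2 x z hcov]; omega
    · have h1 : r z < r y := ih z hcov.lt hlt
      have h2 : r z = r x + 1 := hr.2 x z hcov
      omega

lemma geom_rank_mono (hc : ∀ c : Set L, IsChain (· ≤ ·) c → c.Finite)
    (hr : IsRankFn r) {x y : L} (h : x ≤ y) : r x ≤ r y := by
  rcases eq_or_lt_of_le h with rfl | h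
  · exact le_rfl
  · exact (geom_rank_lt hc hr h).le

lemma geom_eq_of_le_rank (hc : ∀ c : Set L, IsChain (· ≤ ·) c → c.Finite)
    (hr : IsRankFn r) {x y : L} (h : x ≤ y) (hrk : r y ≤ r x) : x = y := by
  rcases eq_or_lt_of_le h with rfl | h
  · rfl
  · exact absurd (geom_rank_lt hc hr h) (by omega)

lemma geom_covby_of_rank (hc : ∀ c : Set L, IsChain (· ≤ ·) c → c.Finite)
    (hr : IsRankFn r) {x y : L} (h : x < y) (hrk : r y ≤ r x + 1) : x ⋖ y := by
  obtain ⟨z, hcov, hzy⟩ := geom_exists_covby hc h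
  rcases eq_or_lt_of_le hzy with rfl | hlt
  · exact hcov
  · have := geom_rank_lt hc hr hlt
    have := hr.2 x z hcov
    omega

lemma geom_rank_atom (hr : IsRankFn r) {a : L} (ha : IsAtom a) : r a = 1 := by
  have h2 := hr.1
  have := hr.2 ⊥ a ha.bot_covBy
  omega


lemma geom_atom_of_rank (hc : ∀ c : Set L, IsChain (· ≤ ·) c → c.Finite)
    (hr : IsRankFn r) {a : L} (ha : r a = 1) : IsAtom a := by
  have hb : (⊥ : L) < a := by
    rcases eq_or_lt_of_le (bot_le : (⊥:L) ≤ a) with rfl | h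
    · exact absurd ha (by rw [hr.1]; omega)
    · exact h
  exact bot_covBy_iff.1 (geom_covby_of_rank hc hr hb (by rw [hr.1]; omega))

lemma geom_rank_coatom (hr : IsRankFn r) (hrank : r ⊤ = 3) {h : L} (hh : IsCoatom h) :
    r h = 2 := by
  have := hr.2 h ⊤ hh.covBy_top
  omega

lemma geom_coatom_of_rank (hc : ∀ c : Set L, IsChain (· ≤ ·) c → c.Finite)
    (hr : IsRankFn r) (hrank : r ⊤ = 3) {h : L} (hh : r h = 2) : IsCoatom h := by
  have hb : h < ⊤ := by
    rcases eq_or_lt_of_le (le_top : h ≤ ⊤) with rfl | hlt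
    · omega
    · exact hlt
  exact covBy_top_iff.1 (geom_covby_of_rank hc hr hb (by omega))

lemma isAtomP_iff {a : L} : IsAtomP a ↔ IsAtom a := by
  constructor
  · rintro ⟨z, hz, hcov⟩
    have : z = ⊥ := le_antisymm (hz ⊥) bot_le
    subst this
    exact bot_covBy_iff.1 hcov
  · intro h
    exact ⟨⊥, fun w => bot_le, h.bot_covBy⟩

lemma atom_le_atom {a b : L} (ha : IsAtom a) (hb : IsAtom b) (h : a ≤ b) : a = b := by
  rcases eq_or_lt_of_le h with rfl | h
  · rfl
  · exact absurd (hb.2 a h) ha.1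

section Ctx
variable (hL : IsGeomLatFH L) (hr : IsRankFn r) (hrank : r ⊤ = 3)
include hL hr hrank

lemma geom_line {a b : L} (ha : IsAtom a) (hb : IsAtom b) (hab : a ≠ b) :
    IsCoatom (a ⊔ b) := by
  obtain ⟨d, had, hbd⟩ := hL.2.2.2.1 ⊥ a b ha.bot_covBy hb.bot_covBy hab
  have hsup : a ⊔ b ≤ d := sup_le had.le hbd.le
  have hne : a ≠ a ⊔ b := by
    intro h
    exact hab (atom_le_atom hb ha (by rw [h]; exact le_sup_right)).symm
  have heq : a ⊔ b = d := by
    rcases eq_or_lt_of_le hsup with h | h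
    · exact h
    · exact absurd h (had.2 (lt_of_le_of_ne le_sup_left hne)).elim
  apply geom_coatom_of_rank hL.2.2.1 hr hrank
  rw [heq, hr.2 a d had, geom_rank_atom hr ha]

lemma geom_line_eq {a b ℓ : L} (ha : IsAtom a) (hb : IsAtom b) (hab : a ≠ b)
    (hℓ : IsCoatom ℓ) (haℓ : a ≤ ℓ) (hbℓ : b ≤ ℓ) : ℓ = a ⊔ b := by
  refine (geom_eq_of_le_rank hL.2.2.1 hr (sup_le haℓ hbℓ) ?_).symm
  rw [geom_rank_coatom hr hrank hℓ, geom_rank_coatom hr hrank (geom_line hL hr hrank ha hb hab)]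

lemma geom_two_atoms {ℓ : L} (hℓ : IsCoatom ℓ) :
    ∃ a b : L, IsAtom a ∧ IsAtom b ∧ a ≠ b ∧ a ≤ ℓ ∧ b ≤ ℓ := by
  obtain ⟨S, hS, hlub⟩ := hL.2.2.2.2 ℓ
  have hrℓ : r ℓ = 2 := geom_rank_coatom hr hrank hℓ
  by_contra hcon
  push_neg at hcon
  have hsmall : ∀ x ∈ S, ∀ y ∈ S, x = y := by
    intro x hx y hy
    by_contra hxy
    exact (hcon x y (isAtomP_iff.1 (hS x hx)) (isAtomP_iff.1 (hS y hy)) hxy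
      (hlub.1 hx)) (hlub.1 hy)
  rcases Set.eq_empty_or_nonempty S with rfl | ⟨a, haS⟩
  · have : ℓ = ⊥ := le_antisymm (hlub.2 (by simp [upperBounds])) bot_le
    rw [this, hr.1] at hrℓ; omega
  · have hub : a ∈ upperBounds S := fun x hx => (hsmall x hx a haS) ▸ le_rfl
    have : r ℓ ≤ r a := by
      have := geom_rank_mono hL.2.2.1 hr (hlub.2 hub)
      omega
    rw [geom_rank_atom hr (isAtomP_iff.1 (hS a haS))] at this
    omega

lemma geom_atom_not_le {ℓ : L} (hℓ : IsCoatom ℓ) :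
    ∃ p : L, IsAtom p ∧ ¬ p ≤ ℓ := by
  by_contra hcon
  push_neg at hcon
  obtain ⟨S, hS, hlub⟩ := hL.2.2.2.2 (⊤ : L)
  have hub : ℓ ∈ upperBounds S := fun x hx => hcon x (isAtomP_iff.1 (hS x hx))
  have h1 := geom_rank_mono hL.2.2.1 hr (hlub.2 hub)
  rw [hrank, geom_rank_coatom hr hrank hℓ] at h1
  omega

lemma geom_coatom_above {a : L} (ha : IsAtom a) :
    ∃ ℓ : L, IsCoatom ℓ ∧ a ≤ ℓ := by
  have hlt : a < ⊤ := by
    rcases eq_or_lt_of_le (le_top : a ≤ ⊤) with rfl | h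
    · have := geom_rank_atom hr ha; omega
    · exact h
  obtain ⟨z, hcov, _⟩ := geom_exists_covby hL.2.2.1 hlt
  refine ⟨z, geom_coatom_of_rank hL.2.2.1 hr hrank ?_, hcov.le⟩
  rw [hr.2 a z hcov, geom_rank_atom hr ha]

lemma geom_two_lines {a : L} (ha : IsAtom a) :
    ∃ ℓ₁ ℓ₂ : L, IsCoatom ℓ₁ ∧ IsCoatom ℓ₂ ∧ ℓ₁ ≠ ℓ₂ ∧ a ≤ ℓ₁ ∧ a ≤ ℓ₂ := by
  obtain ⟨ℓ₁, hℓ₁, haℓ₁⟩ := geom_coatom_above hL hr hrank ha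
  obtain ⟨p, hp, hpℓ₁⟩ := geom_atom_not_le hL hr hrank hℓ₁
  have hap : a ≠ p := fun h => hpℓ₁ (h ▸ haℓ₁)
  refine ⟨ℓ₁, a ⊔ p, hℓ₁, geom_line hL hr hrank ha hp hap, ?_, haℓ₁, le_sup_left⟩
  intro h
  exact hpℓ₁ (h ▸ le_sup_right)

lemma geom_join_inj {q x x' ℓ : L} (hq : IsAtom q) (hx : IsAtom x) (hx' : IsAtom x')
    (hℓ : IsCoatom ℓ) (hqℓ : ¬ q ≤ ℓ) (hxℓ : x ≤ ℓ) (hx'ℓ : x' ≤ ℓ)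
    (heq : q ⊔ x = q ⊔ x') : x = x' := by
  by_contra hxx
  have hqx : q ≠ x := fun h => hqℓ (h ▸ hxℓ)
  have hcoat : IsCoatom (q ⊔ x) := geom_line hL hr hrank hq hx hqx
  have hx'le : x' ≤ q ⊔ x := heq ▸ le_sup_right
  have h1 : q ⊔ x = x ⊔ x' :=
    geom_line_eq hL hr hrank hx hx' hxx hcoat le_sup_right hx'le
  have h2 : ℓ = x ⊔ x' := geom_line_eq hL hr hrank hx hx' hxx hℓ hxℓ hx'ℓ
  exact hqℓ (h2 ▸ h1 ▸ le_sup_left)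

end Ctx
end Geom

section Hall
variable {L : Type u} [CompleteLattice L] {r : L → ℕ}
variable (hL : IsGeomLatFH L) (hr : IsRankFn r) (hrank : r ⊤ = 3)
include hL hr hrank

lemma geom_hall [DecidableEq {a : L // IsAtom a}] [DecidableEq {h : L // IsCoatom h}] (t : {a : L // IsAtom a} → Finset {h : L // IsCoatom h})
    (htdef : ∀ a ℓ, ℓ ∈ t a ↔ (a : L) ≤ (ℓ : L)) :
    ∀ s : Finset {a : L // IsAtom a}, s.card ≤ (s.biUnion t).card := by
  classical
  intro s
  induction s using Finset.strongInduction with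
  | _ s ih =>
  rcases Finset.eq_empty_or_nonempty s with rfl | ⟨a₀, ha₀⟩
  · simp
  by_cases hpriv : ∃ a ∈ s, ∃ ℓ, ℓ ∈ t a ∧ ∀ b ∈ s, b ≠ a → ℓ ∉ t b
  · obtain ⟨a, has, ℓ, hℓa, hpr⟩ := hpriv
    have h1 : (s.erase a).card ≤ ((s.erase a).biUnion t).card :=
      ih _ (Finset.erase_ssubset has)
    have hℓN : ℓ ∉ (s.erase a).biUnion t := by
      intro h
      obtain ⟨b, hb, hℓb⟩ := Finset.mem_biUnion.1 h
      exact hpr b (Finset.mem_of_mem_erase hb) (Finset.ne_of_mem_erase hb) hℓb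
    have hsub : insert ℓ ((s.erase a).biUnion t) ⊆ s.biUnion t := by
      intro x hx
      rcases Finset.mem_insert.1 hx with rfl | hx
      · exact Finset.mem_biUnion.2 ⟨a, has, hℓa⟩
      · obtain ⟨b, hb, hxb⟩ := Finset.mem_biUnion.1 hx
        exact Finset.mem_biUnion.2 ⟨b, Finset.mem_of_mem_erase hb, hxb⟩
    calc s.card = (s.erase a).card + 1 := (Finset.card_erase_add_one has).symm
      _ ≤ ((s.erase a).biUnion t).card + 1 := Nat.add_le_add_right h1 1
      _ = (insert ℓ ((s.erase a).biUnion t)).card := (Finset.card_insert_of_notMem hℓN).symm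
      _ ≤ (s.biUnion t).card := Finset.card_le_card hsub
  -- no private lines: de Bruijn–Erdős counting
  push_neg at hpriv
  by_contra hlt
  push_neg at hlt
  set N := s.biUnion t with hN
  set n := s.card with hn
  set m := N.card with hm
  have hmn : m < n := hlt
  set d : {a : L // IsAtom a} → ℕ := fun a => (t a).card with hd
  set σ : {h : L // IsCoatom h} → ℕ := fun ℓ => (s.filter (fun b => ℓ ∈ t b)).card with hσ
  have hsubN : ∀ a ∈ s, t a ⊆ N := by
    intro a has x hx
    exact Finset.mem_biUnion.2 ⟨a, has, hx⟩
  have hd2 : ∀ a ∈ s, 2 ≤ d a := by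
    intro a has
    obtain ⟨ℓ₁, ℓ₂, h1, h2, hne, hle1, hle2⟩ := geom_two_lines hL hr hrank a.2
    refine Finset.one_lt_card.2 ?_
    exact ⟨⟨ℓ₁, h1⟩, (htdef _ _).2 hle1, ⟨ℓ₂, h2⟩, (htdef _ _).2 hle2,
      fun h => hne (congrArg Subtype.val h)⟩
  have hσ2 : ∀ ℓ ∈ N, 2 ≤ σ ℓ := by
    intro ℓ hℓ
    obtain ⟨a, has, hℓa⟩ := Finset.mem_biUnion.1 hℓ
    obtain ⟨b, hbs, hba, hℓb⟩ := hpriv a has ℓ hℓa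
    refine Finset.one_lt_card.2 ?_
    exact ⟨a, Finset.mem_filter.2 ⟨has, hℓa⟩, b, Finset.mem_filter.2 ⟨hbs, hℓb⟩,
      fun h => hba h.symm⟩
  have hdm : ∀ a ∈ s, d a < m := by
    intro a has
    by_contra hge
    push_neg at hge
    have hteq : t a = N := Finset.eq_of_subset_of_card_le (hsubN a has) hge
    have hcard2 : 1 < s.card := by
      have h2 := hd2 a has
      have h3 : d a ≤ m := Finset.card_le_card (hsubN a has)
      omega
    obtain ⟨b, hbs, hba⟩ := Finset.exists_mem_ne hcard2 a
    obtain ⟨ℓ₁, ℓ₂, h1, h2, hne, hle1, hle2⟩ := geom_two_lines hL hr hrank b.2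
    have hab : (a : L) ≠ (b : L) := fun h => hba (Subtype.ext h.symm)
    have hm1 : (⟨ℓ₁, h1⟩ : {h : L // IsCoatom h}) ∈ t b := (htdef _ _).2 hle1
    have hm2 : (⟨ℓ₂, h2⟩ : {h : L // IsCoatom h}) ∈ t b := (htdef _ _).2 hle2
    have ha1 : (a : L) ≤ ℓ₁ := (htdef a _).1 (hteq ▸ hsubN b hbs hm1)
    have ha2 : (a : L) ≤ ℓ₂ := (htdef a _).1 (hteq ▸ hsubN b hbs hm2)
    have e1 : ℓ₁ = (a : L) ⊔ (b : L) :=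
      geom_line_eq hL hr hrank a.2 b.2 hab h1 ha1 hle1
    have e2 : ℓ₂ = (a : L) ⊔ (b : L) :=
      geom_line_eq hL hr hrank a.2 b.2 hab h2 ha2 hle2
    exact hne (e1.trans e2.symm)
  have hσn : ∀ ℓ ∈ N, σ ℓ < n := by
    intro ℓ hℓN
    by_contra hge
    push_neg at hge
    have hfeq : s.filter (fun b => ℓ ∈ t b) = s :=
      Finset.eq_of_subset_of_card_le (Finset.filter_subset _ _) hge
    have hall : ∀ b ∈ s, ℓ ∈ t b := by
      intro b hbs
      have hb2 : b ∈ s.filter (fun b => ℓ ∈ t b) := by rw [hfeq]; exact hbs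
      exact (Finset.mem_filter.1 hb2).2
    obtain ⟨ℓ₁, ℓ₂, h1, h2, hne, hle1, hle2⟩ := geom_two_lines hL hr hrank a₀.2
    have hone : ∃ ℓ' : {h : L // IsCoatom h}, ℓ' ≠ ℓ ∧ ℓ' ∈ t a₀ := by
      by_cases hq : (⟨ℓ₁, h1⟩ : {h : L // IsCoatom h}) = ℓ
      · refine ⟨⟨ℓ₂, h2⟩, ?_, (htdef _ _).2 hle2⟩
        intro h
        exact hne (congrArg Subtype.val (hq.trans h.symm))
      · exact ⟨⟨ℓ₁, h1⟩, hq, (htdef _ _).2 hle1⟩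
    obtain ⟨ℓ', hℓ'ne, hℓ'a₀⟩ := hone
    obtain ⟨b, hbs, hba, hℓ'b⟩ := hpriv a₀ ha₀ ℓ' hℓ'a₀
    have hab : (a₀ : L) ≠ (b : L) := fun h => hba (Subtype.ext h.symm)
    have e1 : (ℓ' : L) = (a₀ : L) ⊔ (b : L) :=
      geom_line_eq hL hr hrank a₀.2 b.2 hab ℓ'.2 ((htdef _ _).1 hℓ'a₀) ((htdef _ _).1 hℓ'b)
    have e2 : (ℓ : L) = (a₀ : L) ⊔ (b : L) :=
      geom_line_eq hL hr hrank a₀.2 b.2 hab ℓ.2 ((htdef _ _).1 (hall a₀ ha₀))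
        ((htdef _ _).1 (hall b hbs))
    exact hℓ'ne (Subtype.ext (e1.trans e2.symm))
  have hσd : ∀ a ∈ s, ∀ ℓ ∈ N, ℓ ∉ t a → σ ℓ ≤ d a := by
    intro a has ℓ hℓN hℓa
    have hnotle : ¬ (a : L) ≤ (ℓ : L) := fun h => hℓa ((htdef _ _).2 h)
    set f : {a' : L // IsAtom a'} → {h : L // IsCoatom h} := fun b =>
      if hba : (b : L) = (a : L) then ℓ
      else ⟨(a : L) ⊔ (b : L), geom_line hL hr hrank a.2 b.2 (Ne.symm hba)⟩ with hf
    have hbne : ∀ b ∈ s.filter (fun b => ℓ ∈ t b), (b : L) ≠ (a : L) := by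
      intro b hb heq
      have : ℓ ∈ t b := (Finset.mem_filter.1 hb).2
      exact hℓa (by rwa [Subtype.ext heq] at this)
    refine Finset.card_le_card_of_injOn f ?_ ?_
    · intro b hb
      rw [hf]
      simp only [dif_neg (hbne b hb)]
      exact (htdef _ _).2 le_sup_left
    · intro b hb b' hb' heq
      rw [hf] at heq
      simp only [dif_neg (hbne b hb), dif_neg (hbne b' hb')] at heq
      have hvals : (a : L) ⊔ (b : L) = (a : L) ⊔ (b' : L) := congrArg Subtype.val heq
      exact Subtype.ext (geom_join_inj hL hr hrank a.2 b.2 b'.2 ℓ.2 hnotle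
        ((htdef _ _).1 (Finset.mem_filter.1 hb).2) ((htdef _ _).1 (Finset.mem_filter.1 hb').2)
        hvals)
  -- the counting argument
  set T : Finset ({a : L // IsAtom a} × {h : L // IsCoatom h}) :=
    (s ×ˢ N).filter (fun p => p.2 ∉ t p.1) with hT
  have hTne : T.Nonempty := by
    have hda : d a₀ < m := hdm a₀ ha₀
    have : ∃ ℓ ∈ N, ℓ ∉ t a₀ := by
      by_contra hcon
      push_neg at hcon
      have : N ⊆ t a₀ := fun ℓ hℓ => hcon ℓ hℓ
      have h5 := Finset.card_le_card this
      have hdd : (t a₀).card = d a₀ := rfl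
      omega
    obtain ⟨ℓ, hℓN, hℓa⟩ := this
    exact ⟨(a₀, ℓ), Finset.mem_filter.2 ⟨Finset.mem_product.2 ⟨ha₀, hℓN⟩, hℓa⟩⟩
  have hcardA : ∀ a ∈ s, (N.filter (fun ℓ => ℓ ∉ t a)).card = m - d a := by
    intro a has
    have h2 : N.filter (fun ℓ => ℓ ∈ t a) = t a := by
      apply Finset.Subset.antisymm
      · exact fun x hx => (Finset.mem_filter.1 hx).2
      · exact fun x hx => Finset.mem_filter.2 ⟨hsubN a has hx, hx⟩
    rw [Finset.filter_not, h2, Finset.card_sdiff_of_subset (hsubN a has)]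
  have hcardB : ∀ ℓ ∈ N, (s.filter (fun b => ℓ ∉ t b)).card = n - σ ℓ := by
    intro ℓ hℓ
    rw [Finset.filter_not, Finset.card_sdiff_of_subset (Finset.filter_subset _ _)]
  set FA : {a : L // IsAtom a} → ℚ := fun a => 1 / (n * (m - d a)) with hFA
  set FB : {h : L // IsCoatom h} → ℚ := fun ℓ => 1 / (m * (n - σ ℓ)) with hFB
  have hApos : ∀ a ∈ s, (0:ℚ) < n * (m - d a) := by
    intro a has
    have h1 := hdm a has
    have h2 : 0 < n := by omega
    have : (d a : ℚ) < (m : ℚ) := by exact_mod_cast h1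
    have hn0 : (0:ℚ) < (n:ℚ) := by exact_mod_cast h2
    nlinarith
  have hBpos : ∀ ℓ ∈ N, (0:ℚ) < m * (n - σ ℓ) := by
    intro ℓ hℓ
    have h1 := hσn ℓ hℓ
    have h2 : 0 < m := by
      have := hd2 a₀ ha₀
      have := hdm a₀ ha₀
      omega
    have : (σ ℓ : ℚ) < (n : ℚ) := by exact_mod_cast h1
    have hm0 : (0:ℚ) < (m:ℚ) := by exact_mod_cast h2
    nlinarith
  have hA1 : ∑ p ∈ T, FA p.1 = 1 := by
    rw [hT, Finset.sum_filter, Finset.sum_product]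
    have hinner : ∀ a ∈ s, (∑ ℓ ∈ N, if ℓ ∉ t a then FA a else 0) = 1 / n := by
      intro a has
      rw [← Finset.sum_filter, Finset.sum_const, hcardA a has, nsmul_eq_mul]
      have hdlt := hdm a has
      have hcast : ((m - d a : ℕ) : ℚ) = (m : ℚ) - (d a : ℚ) := by
        rw [Nat.cast_sub hdlt.le]
      rw [hcast, hFA]
      have hne : (m : ℚ) - (d a : ℚ) ≠ 0 := by
        have : (d a : ℚ) < (m : ℚ) := by exact_mod_cast hdlt
        linarith
      have hnne : (n : ℚ) ≠ 0 := Nat.cast_ne_zero.2 (by omega)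
      field_simp
    rw [Finset.sum_congr rfl hinner, Finset.sum_const, nsmul_eq_mul]
    have hnne : (n : ℚ) ≠ 0 := Nat.cast_ne_zero.2 (by omega)
    rw [hn]
    field_simp
    exact div_self hnne
  have hB1 : ∑ p ∈ T, FB p.2 = 1 := by
    rw [hT, Finset.sum_filter, Finset.sum_product_right]
    have hm0 : 0 < m := by
      have := hd2 a₀ ha₀
      have := hdm a₀ ha₀
      omega
    have hinner : ∀ ℓ ∈ N, (∑ a ∈ s, if ℓ ∉ t a then FB ℓ else 0) = 1 / m := by
      intro ℓ hℓ
      rw [← Finset.sum_filter, Finset.sum_const, hcardB ℓ hℓ, nsmul_eq_mul]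
      have hslt := hσn ℓ hℓ
      have hcast : ((n - σ ℓ : ℕ) : ℚ) = (n : ℚ) - (σ ℓ : ℚ) := by
        rw [Nat.cast_sub hslt.le]
      rw [hcast, hFB]
      have hne : (n : ℚ) - (σ ℓ : ℚ) ≠ 0 := by
        have : (σ ℓ : ℚ) < (n : ℚ) := by exact_mod_cast hslt
        linarith
      have hmne : (m : ℚ) ≠ 0 := Nat.cast_ne_zero.2 (by omega)
      field_simp
    rw [Finset.sum_congr rfl hinner, Finset.sum_const, nsmul_eq_mul]
    have hmne : (m : ℚ) ≠ 0 := Nat.cast_ne_zero.2 (by omega)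
    rw [hm]
    field_simp
    exact div_self hmne
  have hlt2 : ∑ p ∈ T, FB p.2 < ∑ p ∈ T, FA p.1 := by
    refine Finset.sum_lt_sum_of_nonempty hTne ?_
    intro p hp
    obtain ⟨hps, hpt⟩ := Finset.mem_filter.1 hp
    obtain ⟨hp1, hp2⟩ := Finset.mem_product.1 hps
    have hσd' := hσd p.1 hp1 p.2 hp2 hpt
    have h1 := hdm p.1 hp1
    have h2 := hσn p.2 hp2
    have h3 := hσ2 p.2 hp2
    have h4 := hApos p.1 hp1
    have h5 := hBpos p.2 hp2
    rw [hFA, hFB, div_lt_div_iff₀ h5 h4]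
    have c1 : (σ p.2 : ℚ) ≤ (d p.1 : ℚ) := by exact_mod_cast hσd'
    have c2 : (d p.1 : ℚ) < (m : ℚ) := by exact_mod_cast h1
    have c3 : (σ p.2 : ℚ) < (n : ℚ) := by exact_mod_cast h2
    have c4 : (2 : ℚ) ≤ (σ p.2 : ℚ) := by exact_mod_cast h3
    have c5 : (m : ℚ) < (n : ℚ) := by exact_mod_cast hmn
    nlinarith
  rw [hA1, hB1] at hlt2
  exact absurd hlt2 (lt_irrefl _)
end Hall

section Main
variable {L : Type u} [CompleteLattice L] {r : L → ℕ}
variable (hL : IsGeomLatFH L) (hr : IsRankFn r) (hrank : r ⊤ = 3)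
include hL hr hrank

lemma geom_finite_matching (hfin : {a : L | IsAtom a}.Finite) : HasMatching L := by
  classical
  have hCfin : {h : L | IsCoatom h}.Finite := by
    have hsub : {h : L | IsCoatom h} ⊆
        (fun pr : L × L => pr.1 ⊔ pr.2) '' ({a | IsAtom a} ×ˢ {a | IsAtom a}) := by
      intro ℓ hℓ
      obtain ⟨a, b, ha, hb, hab, haℓ, hbℓ⟩ := geom_two_atoms hL hr hrank hℓ
      exact ⟨(a, b), ⟨ha, hb⟩, (geom_line_eq hL hr hrank ha hb hab hℓ haℓ hbℓ).symm⟩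
    exact ((hfin.prod hfin).image _).subset hsub
  haveI fA : Fintype {a : L // IsAtom a} := hfin.fintype
  haveI fH : Fintype {h : L // IsCoatom h} := hCfin.fintype
  set t : {a : L // IsAtom a} → Finset {h : L // IsCoatom h} :=
    fun a => Finset.univ.filter (fun ℓ => (a : L) ≤ (ℓ : L)) with ht
  have htdef : ∀ a ℓ, ℓ ∈ t a ↔ (a : L) ≤ (ℓ : L) := by
    intro a ℓ
    simp [ht]
  obtain ⟨f, hfinj, hft⟩ := (Finset.all_card_le_biUnion_card_iff_exists_injective t).1
    (geom_hall hL hr hrank t htdef)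
  exact ⟨f, hfinj, fun a => (htdef a (f a)).1 (hft a)⟩

open Cardinal in
lemma geom_infinite_matching (hinf : {a : L | IsAtom a}.Infinite) : HasMatching L := by
  classical
  set Lines : L → Set L := fun x => {ℓ : L | IsCoatom ℓ ∧ x ≤ ℓ} with hLines
  set κ : Cardinal.{u} := #{a : L | IsAtom a} with hκdef
  have hκ : ℵ₀ ≤ κ := by
    rw [hκdef, Cardinal.aleph0_le_mk_iff]
    exact hinf.to_subtype
  -- injection of atoms of a line into lines through an outside atom
  have hinj : ∀ q ℓ : L, IsAtom q → IsCoatom ℓ → ¬ q ≤ ℓ →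
      #{x : L | IsAtom x ∧ x ≤ ℓ} ≤ #(Lines q) := by
    intro q ℓ hq hℓ hqℓ
    refine Cardinal.mk_le_of_injective (f := fun x : {x : L | IsAtom x ∧ x ≤ ℓ} =>
      (⟨q ⊔ x.1, geom_line hL hr hrank hq x.2.1
        (fun h => hqℓ (h ▸ x.2.2)), le_sup_left⟩ : Lines q)) ?_
    intro x y hxy
    have hval : q ⊔ (x : L) = q ⊔ (y : L) := congrArg Subtype.val hxy
    exact Subtype.ext (geom_join_inj hL hr hrank hq x.2.1 y.2.1 hℓ hqℓ x.2.2 y.2.2 hval)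
  by_cases hsm : ∃ p : L, ∃ q : L, IsAtom p ∧ IsAtom q ∧ p ≠ q ∧
      #(Lines p) < κ ∧ #(Lines q) < κ
  · -- Case II : a dominant line exists
    obtain ⟨p, q, hp, hq, hpq, hps, hqs⟩ := hsm
    set m : L := p ⊔ q with hm
    have hmco : IsCoatom m := geom_line hL hr hrank hp hq hpq
    have hpm : p ≤ m := le_sup_left
    have hqm : q ≤ m := le_sup_right
    set M : Set L := {x : L | IsAtom x ∧ x ≤ m} with hM
    -- κ ≤ #M
    have hMbig : κ ≤ #M := by
      have hcover : {a : L | IsAtom a} ⊆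
          M ∪ ⋃ (ℓ : L) (_ : ℓ ∈ Lines p \ {m}), {x : L | IsAtom x ∧ x ≤ ℓ} := by
        intro x hx
        by_cases hxm : x ≤ m
        · exact Or.inl ⟨hx, hxm⟩
        · have hxp : x ≠ p := fun h => hxm (h ▸ hpm)
          have hco : IsCoatom (p ⊔ x) := geom_line hL hr hrank hp hx (Ne.symm hxp)
          have hne : p ⊔ x ≠ m := by
            intro h
            exact hxm (h ▸ (le_sup_right : x ≤ p ⊔ x))
          refine Or.inr (Set.mem_biUnion (⟨⟨hco, le_sup_left⟩, hne⟩ :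
            p ⊔ x ∈ Lines p \ {m}) ⟨hx, le_sup_right⟩)
      have h1 : κ ≤ #M + #(⋃ (ℓ : L) (_ : ℓ ∈ Lines p \ {m}), {x : L | IsAtom x ∧ x ≤ ℓ}) :=
        (mk_le_mk_of_subset hcover).trans (mk_union_le _ _)
      have h2 : #(⋃ (ℓ : L) (_ : ℓ ∈ Lines p \ {m}), {x : L | IsAtom x ∧ x ≤ ℓ}) < κ := by
        have h3 : ∀ ℓ : (Lines p \ {m} : Set L), #{x : L | IsAtom x ∧ x ≤ (ℓ : L)} ≤ #(Lines q) := by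
          rintro ⟨ℓ, ⟨hℓco, hpℓ⟩, hℓm⟩
          refine hinj q ℓ hq hℓco ?_
          intro hqℓ
          exact hℓm (geom_line_eq hL hr hrank hp hq hpq hℓco hpℓ hqℓ)
        calc #(⋃ (ℓ : L) (_ : ℓ ∈ Lines p \ {m}), {x : L | IsAtom x ∧ x ≤ ℓ})
            ≤ #(Lines p \ {m} : Set L) * ⨆ ℓ : (Lines p \ {m} : Set L), #{x : L | IsAtom x ∧ x ≤ (ℓ : L)} :=
              Cardinal.mk_biUnion_le _ _
          _ ≤ #(Lines p \ {m} : Set L) * #(Lines q) := by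
              refine mul_le_mul_right (ciSup_le' h3) _
          _ < κ := Cardinal.mul_lt_of_lt hκ
              ((mk_le_mk_of_subset Set.diff_subset).trans_lt hps) hqs
      by_contra hMlt
      push_neg at hMlt
      exact absurd (h1.trans_lt (Cardinal.add_lt_of_lt hκ hMlt h2)) (lt_irrefl _)
    -- an atom off the line m
    obtain ⟨b₀, hb₀, hb₀m⟩ := geom_atom_not_le hL hr hrank hmco
    have hb₀p : b₀ ≠ p := fun h => hb₀m (h ▸ hpm)
    -- used lines
    set D : Set L := insert m (insert (b₀ ⊔ p) {ℓ : L | ∃ x : L, IsAtom x ∧ x ≤ m ∧ ℓ = x ⊔ b₀})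
      with hD
    -- SDR for the off-line atoms other than b₀
    set ι : Set L := {x : L | IsAtom x ∧ ¬ x ≤ m ∧ x ≠ b₀} with hι
    have hιle : #ι ≤ κ := mk_le_mk_of_subset (fun x hx => hx.1)
    have hCbig : ∀ i : ι, κ ≤ #(Lines (i : L)) := by
      rintro ⟨b, hb, hbm, hbb₀⟩
      exact hMbig.trans (hinj b m hb hmco hbm)
    have hCD : ∀ i : ι, #((Lines (i : L) ∩ D : Set L)) < κ := by
      rintro ⟨b, hb, hbm, hbb₀⟩
      have hsub : (Lines b ∩ D : Set L) ⊆ {b₀ ⊔ p, b ⊔ b₀} := by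
        rintro ℓ ⟨⟨hℓco, hbℓ⟩, hℓD⟩
        rcases hℓD with rfl | hℓD
        · exact absurd hbℓ hbm
        rcases hℓD with rfl | ⟨x, hx, hxm, rfl⟩
        · exact Or.inl rfl
        · have hxb₀ : x ≠ b₀ := fun h => hb₀m (h ▸ hxm)
          have hbb : b ≠ b₀ := hbb₀
          have := geom_line_eq hL hr hrank hb (show IsAtom b₀ from hb₀)
            hbb hℓco hbℓ le_sup_right
          exact Or.inr (by rw [this]; rfl)
      calc #((Lines b ∩ D : Set L)) ≤ #({b₀ ⊔ p, b ⊔ b₀} : Set L) := mk_le_mk_of_subset hsub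
        _ < ℵ₀ := ((Set.finite_singleton _).insert _).lt_aleph0
        _ ≤ κ := hκ
    obtain ⟨g, hginj, hgspec⟩ := exists_sdr hκ hιle (fun i : ι => Lines (i : L)) D hCbig hCD
    -- assemble the matching
    have hxb₀ne : ∀ x : L, x ≤ m → x ≠ b₀ := fun x hx h => hb₀m (h ▸ hx)
    set f : {a : L // IsAtom a} → {h : L // IsCoatom h} := fun a =>
      if h1 : (a : L) ≤ m then
        (if (a : L) = p then ⟨m, hmco⟩
         else ⟨(a : L) ⊔ b₀, geom_line hL hr hrank a.2 hb₀ (hxb₀ne _ h1)⟩)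
      else
        (if h2 : (a : L) = b₀ then ⟨b₀ ⊔ p, geom_line hL hr hrank hb₀ hp hb₀p⟩
         else ⟨g ⟨(a : L), a.2, h1, h2⟩, ((hgspec ⟨(a : L), a.2, h1, h2⟩).1).1⟩)
      with hf
    refine ⟨f, ?_, ?_⟩
    · intro a b hab
      by_contra hne
      have hvalne : (a : L) ≠ (b : L) := fun h => hne (Subtype.ext h)
      simp only [hf] at hab
      by_cases ham : (a : L) ≤ m <;> by_cases hbm : (b : L) ≤ m
      · rw [dif_pos ham, dif_pos hbm] at hab
        by_cases hap : (a : L) = p <;> by_cases hbp : (b : L) = p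
        · exact hvalne (hap.trans hbp.symm)
        · rw [if_pos hap, if_neg hbp] at hab
          have hval : m = (b : L) ⊔ b₀ := congrArg Subtype.val hab
          exact hb₀m (hval ▸ le_sup_right)
        · rw [if_neg hap, if_pos hbp] at hab
          have hval : (a : L) ⊔ b₀ = m := congrArg Subtype.val hab
          exact hb₀m (hval ▸ le_sup_right)
        · rw [if_neg hap, if_neg hbp] at hab
          have hval : (a : L) ⊔ b₀ = (b : L) ⊔ b₀ := congrArg Subtype.val hab
          rw [sup_comm ((a : L)) b₀, sup_comm ((b : L)) b₀] at hval
          exact hvalne (geom_join_inj hL hr hrank hb₀ a.2 b.2 hmco hb₀m ham hbm hval)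
      · -- a on m, b off m
        rw [dif_pos ham, dif_neg hbm] at hab
        by_cases hbb₀ : (b : L) = b₀
        · rw [dif_pos hbb₀] at hab
          by_cases hap : (a : L) = p
          · rw [if_pos hap] at hab
            have hval : m = b₀ ⊔ p := congrArg Subtype.val hab
            exact hb₀m (hval ▸ le_sup_left)
          · rw [if_neg hap] at hab
            have hval : (a : L) ⊔ b₀ = b₀ ⊔ p := congrArg Subtype.val hab
            have hpline : p ≤ (a : L) ⊔ b₀ := hval ▸ le_sup_right
            have hco : IsCoatom ((a : L) ⊔ b₀) :=
              geom_line hL hr hrank a.2 hb₀ (hxb₀ne _ ham)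
            have h1 := geom_line_eq hL hr hrank a.2 hp hap hco le_sup_left hpline
            have hmeq : (a : L) ⊔ b₀ = m := by
              rw [h1]
              exact (geom_line_eq hL hr hrank a.2 hp hap hmco ham hpm).symm
            exact hb₀m (hmeq ▸ le_sup_right)
        · rw [dif_neg hbb₀] at hab
          have hgb := (hgspec ⟨(b : L), b.2, hbm, hbb₀⟩).2
          apply hgb
          by_cases hap : (a : L) = p
          · rw [if_pos hap] at hab
            have hval : m = g ⟨(b : L), b.2, hbm, hbb₀⟩ := congrArg Subtype.val hab
            rw [← hval]
            exact Set.mem_insert _ _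
          · rw [if_neg hap] at hab
            have hval : (a : L) ⊔ b₀ = g ⟨(b : L), b.2, hbm, hbb₀⟩ := congrArg Subtype.val hab
            rw [← hval]
            exact Set.mem_insert_of_mem _ (Set.mem_insert_of_mem _ ⟨(a : L), a.2, ham, rfl⟩)
      · -- a off m, b on m
        rw [dif_neg ham, dif_pos hbm] at hab
        by_cases haa₀ : (a : L) = b₀
        · rw [dif_pos haa₀] at hab
          by_cases hbp : (b : L) = p
          · rw [if_pos hbp] at hab
            have hval : b₀ ⊔ p = m := congrArg Subtype.val hab
            exact hb₀m (hval ▸ le_sup_left)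
          · rw [if_neg hbp] at hab
            have hval : b₀ ⊔ p = (b : L) ⊔ b₀ := congrArg Subtype.val hab
            have hpline : p ≤ (b : L) ⊔ b₀ := hval ▸ le_sup_right
            have hco : IsCoatom ((b : L) ⊔ b₀) :=
              geom_line hL hr hrank b.2 hb₀ (hxb₀ne _ hbm)
            have h1 := geom_line_eq hL hr hrank b.2 hp hbp hco le_sup_left hpline
            have hmeq : (b : L) ⊔ b₀ = m := by
              rw [h1]
              exact (geom_line_eq hL hr hrank b.2 hp hbp hmco hbm hpm).symm
            exact hb₀m (hmeq ▸ le_sup_right)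
        · rw [dif_neg haa₀] at hab
          have hga := (hgspec ⟨(a : L), a.2, ham, haa₀⟩).2
          apply hga
          by_cases hbp : (b : L) = p
          · rw [if_pos hbp] at hab
            have hval : g ⟨(a : L), a.2, ham, haa₀⟩ = m := congrArg Subtype.val hab
            rw [hval]
            exact Set.mem_insert _ _
          · rw [if_neg hbp] at hab
            have hval : g ⟨(a : L), a.2, ham, haa₀⟩ = (b : L) ⊔ b₀ := congrArg Subtype.val hab
            rw [hval]
            exact Set.mem_insert_of_mem _ (Set.mem_insert_of_mem _ ⟨(b : L), b.2, hbm, rfl⟩)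
      · -- both off m
        rw [dif_neg ham, dif_neg hbm] at hab
        by_cases haa₀ : (a : L) = b₀ <;> by_cases hbb₀ : (b : L) = b₀
        · exact hvalne (haa₀.trans hbb₀.symm)
        · rw [dif_pos haa₀, dif_neg hbb₀] at hab
          have hgb := (hgspec ⟨(b : L), b.2, hbm, hbb₀⟩).2
          apply hgb
          have hval : b₀ ⊔ p = g ⟨(b : L), b.2, hbm, hbb₀⟩ := congrArg Subtype.val hab
          rw [← hval]
          exact Set.mem_insert_of_mem _ (Set.mem_insert _ _)
        · rw [dif_neg haa₀, dif_pos hbb₀] at hab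
          have hga := (hgspec ⟨(a : L), a.2, ham, haa₀⟩).2
          apply hga
          have hval : g ⟨(a : L), a.2, ham, haa₀⟩ = b₀ ⊔ p := congrArg Subtype.val hab
          rw [hval]
          exact Set.mem_insert_of_mem _ (Set.mem_insert _ _)
        · rw [dif_neg haa₀, dif_neg hbb₀] at hab
          have hval : g ⟨(a : L), a.2, ham, haa₀⟩ = g ⟨(b : L), b.2, hbm, hbb₀⟩ :=
            congrArg Subtype.val hab
          have hij : (⟨(a : L), a.2, ham, haa₀⟩ : ↥ι) = ⟨(b : L), b.2, hbm, hbb₀⟩ := hginj hval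
          exact hvalne (congrArg (fun i : ↥ι => (i : L)) hij)
    · intro a
      have : f a = if h1 : (a : L) ≤ m then
          (if (a : L) = p then ⟨m, hmco⟩
           else ⟨(a : L) ⊔ b₀, geom_line hL hr hrank a.2 hb₀ (hxb₀ne _ h1)⟩)
        else
          (if h2 : (a : L) = b₀ then ⟨b₀ ⊔ p, geom_line hL hr hrank hb₀ hp hb₀p⟩
           else ⟨g ⟨(a : L), a.2, h1, h2⟩, ((hgspec ⟨(a : L), a.2, h1, h2⟩).1).1⟩) := rfl
      rw [this]
      by_cases ham : (a : L) ≤ m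
      · rw [dif_pos ham]
        by_cases hap : (a : L) = p
        · rw [if_pos hap]
          exact hap.le.trans hpm
        · rw [if_neg hap]
          exact le_sup_left
      · rw [dif_neg ham]
        by_cases haa₀ : (a : L) = b₀
        · rw [dif_pos haa₀]
          exact haa₀.le.trans le_sup_left
        · rw [dif_neg haa₀]
          exact ((hgspec ⟨(a : L), a.2, ham, haa₀⟩).1).2
  · -- Case I : at most one atom of small degree
    push_neg at hsm
    obtain ⟨⟨p₀, hp₀a⟩⟩ : Nonempty {a : L | IsAtom a} := hinf.to_subtype.nonempty
    have hchoice : ∃ p : L, IsAtom p ∧ ∀ x : L, IsAtom x → x ≠ p → κ ≤ #(Lines x) := by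
      by_cases hx : ∃ x : L, IsAtom x ∧ #(Lines x) < κ
      · obtain ⟨x, hxa, hxs⟩ := hx
        refine ⟨x, hxa, fun y hy hyx => ?_⟩
        by_contra hys
        push_neg at hys
        exact absurd (hsm y x hy hxa hyx hys) (not_le.2 hxs)
      · push_neg at hx
        exact ⟨p₀, hp₀a, fun y hy _ => hx y hy⟩
    obtain ⟨p, hpa, hbig⟩ := hchoice
    obtain ⟨ℓ₀, hℓ₀co, hpℓ₀⟩ := geom_coatom_above hL hr hrank hpa
    set ι : Set L := {x : L | IsAtom x ∧ x ≠ p} with hι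
    have hιle : #ι ≤ κ := mk_le_mk_of_subset (fun x hx => hx.1)
    have hCbig : ∀ i : ι, κ ≤ #(Lines (i : L)) := by
      rintro ⟨x, hx, hxp⟩
      exact hbig x hx hxp
    have hCD : ∀ i : ι, #((Lines (i : L) ∩ {ℓ₀} : Set L)) < κ := by
      intro i
      exact ((mk_le_mk_of_subset Set.inter_subset_right).trans_lt
        ((Set.finite_singleton _).lt_aleph0)).trans_le hκ
    obtain ⟨g, hginj, hgspec⟩ :=
      exists_sdr hκ hιle (fun i : ι => Lines (i : L)) {ℓ₀} hCbig hCD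
    set f : {a : L // IsAtom a} → {h : L // IsCoatom h} := fun a =>
      if h : (a : L) = p then ⟨ℓ₀, hℓ₀co⟩
      else ⟨g ⟨(a : L), a.2, h⟩, ((hgspec ⟨(a : L), a.2, h⟩).1).1⟩ with hf
    refine ⟨f, ?_, ?_⟩
    · intro a b hab
      by_contra hne
      have hvalne : (a : L) ≠ (b : L) := fun h => hne (Subtype.ext h)
      simp only [hf] at hab
      by_cases hap : (a : L) = p <;> by_cases hbp : (b : L) = p
      · exact hvalne (hap.trans hbp.symm)
      · rw [dif_pos hap, dif_neg hbp] at hab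
        have hval : ℓ₀ = g ⟨(b : L), b.2, hbp⟩ := congrArg Subtype.val hab
        exact (hgspec ⟨(b : L), b.2, hbp⟩).2 (Set.mem_singleton_iff.2 hval.symm)
      · rw [dif_neg hap, dif_pos hbp] at hab
        have hval : g ⟨(a : L), a.2, hap⟩ = ℓ₀ := congrArg Subtype.val hab
        exact (hgspec ⟨(a : L), a.2, hap⟩).2 (Set.mem_singleton_iff.2 hval)
      · rw [dif_neg hap, dif_neg hbp] at hab
        have hval : g ⟨(a : L), a.2, hap⟩ = g ⟨(b : L), b.2, hbp⟩ := congrArg Subtype.val hab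
        have hij : (⟨(a : L), a.2, hap⟩ : ↥ι) = ⟨(b : L), b.2, hbp⟩ := hginj hval
        exact hvalne (congrArg (fun i : ↥ι => (i : L)) hij)
    · intro a
      have hfa : f a = if h : (a : L) = p then ⟨ℓ₀, hℓ₀co⟩
          else ⟨g ⟨(a : L), a.2, h⟩, ((hgspec ⟨(a : L), a.2, h⟩).1).1⟩ := rfl
      rw [hfa]
      by_cases hap : (a : L) = p
      · rw [dif_pos hap]
        exact hap.le.trans hpℓ₀
      · rw [dif_neg hap]
        exact ((hgspec ⟨(a : L), a.2, hap⟩).1).2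

end Main

/-- Every geometric lattice of rank 3 has a matching. -/
theorem rank_three_geometric_lattice_matching (L : Type u) [CompleteLattice L]
    (hL : IsGeomLatFH L) (r : L → ℕ) (hr : IsRankFn r) (hrank : r ⊤ = 3) :
    HasMatching L := by
  by_cases hfin : {a : L | IsAtom a}.Finite
  · exact geom_finite_matching hL hr hrank hfin
  · exact geom_infinite_matching hL hr hrank hfin
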